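/- None of the following classes is closed under complementation: 1ReachU ≠ co-1ReachU, 1ReachFewU ≠ co-1ReachFewU, 1FewU ≠ co-1FewU, and 1Few ≠ co-1Few. -/

import Mathlib

/-! ## One-way nondeterministic finite automata -/

structure OneNFA (α : Type) : Type 1 where
  Q : Type
  [finQ : Fintype Q]
  start : Q
  next : Q → α → Set Q
  next_nonempty : ∀ q a, (next q a).Nonempty
  acc : Set Q

attribute [instance] OneNFA.finQ

namespace OneNFA

variable {α : Type}

/-- The state complexity (number of inner states). -/
def sc (M : OneNFA α) : ℕ := Fintype.card M.Q

/-- `p` is a computation path of `M` on input `x`. -/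
def IsPath (M : OneNFA α) (x : List α) (p : Fin (x.length + 1) → M.Q) : Prop :=
  p 0 = M.start ∧ ∀ i : Fin x.length, p i.succ ∈ M.next (p i.castSucc) (x.get i)

/-- `p` is an accepting computation path of `M` on input `x`. -/
def IsAccPath (M : OneNFA α) (x : List α) (p : Fin (x.length + 1) → M.Q) : Prop :=
  M.IsPath x p ∧ p (Fin.last x.length) ∈ M.acc

def Accepts (M : OneNFA α) (x : List α) : Prop := ∃ p, M.IsAccPath x p

/-- `M` is a 1dfa: every transition set is a singleton. -/
def Deterministic (M : OneNFA α) : Prop := ∀ q a, ∃ q', M.next q a = {q'}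

end OneNFA

/-! ## Families of promise problems -/

structure PromiseFamily (α : Type) where
  pos : ℕ → Set (List α)
  neg : ℕ → Set (List α)
  disj : ∀ n, Disjoint (pos n) (neg n)

namespace PromiseFamily

def valid {α : Type} (L : PromiseFamily α) (n : ℕ) : Set (List α) := L.pos n ∪ L.neg n

def co {α : Type} (L : PromiseFamily α) : PromiseFamily α :=
  ⟨L.neg, L.pos, fun n => (L.disj n).symm⟩

end PromiseFamily

/-- A family of promise problems over some finite alphabet. -/
structure Family : Type 1 where
  alph : Type
  [finA : Fintype alph]
  prob : PromiseFamily alph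

attribute [instance] Family.finA

def Family.co (F : Family) : Family := { alph := F.alph, prob := F.prob.co }

/-! ## One-way machine families -/

def Solves1 {α : Type} (M : ℕ → OneNFA α) (L : PromiseFamily α) : Prop :=
  ∀ n, (∀ x ∈ L.pos n, (M n).Accepts x) ∧ (∀ x ∈ L.neg n, ¬ (M n).Accepts x)

def PolySize1 {α : Type} (M : ℕ → OneNFA α) : Prop :=
  ∃ p : Polynomial ℕ, ∀ n, (M n).sc ≤ p.eval n

def Unambiguous1 {α : Type} (M : ℕ → OneNFA α) (L : PromiseFamily α) : Prop :=
  ∀ n, ∀ x ∈ L.valid n, {p | (M n).IsAccPath x p}.Subsingleton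

def AcceptFew1 {α : Type} (M : ℕ → OneNFA α) (L : PromiseFamily α) : Prop :=
  ∃ P : MvPolynomial (Fin 2) ℕ, ∀ n, ∀ x ∈ L.valid n,
    {p | (M n).IsAccPath x p}.ncard ≤ MvPolynomial.eval ![n, x.length] P

def WeaklyUnambiguous1 {α : Type} (M : ℕ → OneNFA α) (L : PromiseFamily α) : Prop :=
  ∀ n, ∀ x ∈ L.valid n, ∀ q : (M n).Q,
    {p | (M n).IsAccPath x p ∧ p (Fin.last x.length) = q}.Subsingleton

def ReachUnambiguous1 {α : Type} (M : ℕ → OneNFA α) (L : PromiseFamily α) : Prop :=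
  ∀ n, ∀ x ∈ L.valid n, ∀ i ≤ x.length, ∀ q : (M n).Q,
    {p : Fin ((x.take i).length + 1) → (M n).Q |
      (M n).IsPath (x.take i) p ∧ p (Fin.last (x.take i).length) = q}.Subsingleton

def ReachFew1 {α : Type} (M : ℕ → OneNFA α) (L : PromiseFamily α) : Prop :=
  ∃ P : MvPolynomial (Fin 2) ℕ, ∀ n, ∀ x ∈ L.valid n, ∀ i ≤ x.length, ∀ q : (M n).Q,
    {p : Fin ((x.take i).length + 1) → (M n).Q |
      (M n).IsPath (x.take i) p ∧ p (Fin.last (x.take i).length) = q}.ncard ≤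
      MvPolynomial.eval ![n, x.length] P

/-! ## One-way nonuniform state complexity classes -/

def oneN : Set Family :=
  {F | ∃ M : ℕ → OneNFA F.alph, PolySize1 M ∧ Solves1 M F.prob}

def oneD : Set Family :=
  {F | ∃ M : ℕ → OneNFA F.alph, PolySize1 M ∧ (∀ n, (M n).Deterministic) ∧ Solves1 M F.prob}

def oneU : Set Family :=
  {F | ∃ M : ℕ → OneNFA F.alph, PolySize1 M ∧ Unambiguous1 M F.prob ∧ Solves1 M F.prob}

def oneFew : Set Family :=
  {F | ∃ M : ℕ → OneNFA F.alph, PolySize1 M ∧ AcceptFew1 M F.prob ∧ Solves1 M F.prob}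

def oneFewU : Set Family :=
  {F | ∃ M : ℕ → OneNFA F.alph, PolySize1 M ∧ AcceptFew1 M F.prob ∧
        WeaklyUnambiguous1 M F.prob ∧ Solves1 M F.prob}

def oneReachU : Set Family :=
  {F | ∃ M : ℕ → OneNFA F.alph, PolySize1 M ∧ AcceptFew1 M F.prob ∧
        ReachUnambiguous1 M F.prob ∧ Solves1 M F.prob}

def oneReachFew : Set Family :=
  {F | ∃ M : ℕ → OneNFA F.alph, PolySize1 M ∧ AcceptFew1 M F.prob ∧
        ReachFew1 M F.prob ∧ Solves1 M F.prob}

def oneReachFewU : Set Family :=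
  {F | ∃ M : ℕ → OneNFA F.alph, PolySize1 M ∧ AcceptFew1 M F.prob ∧
        ReachFew1 M F.prob ∧ WeaklyUnambiguous1 M F.prob ∧ Solves1 M F.prob}

/-- The complement class `co-C`. -/
def coC (C : Set Family) : Set Family := {F | F.co ∈ C}
/-! ## Two-way nondeterministic finite automata -/

/-- A tape symbol: either an input symbol, the left endmarker `Sum.inr false`,
or the right endmarker `Sum.inr true`. -/
def TapeSym (α : Type) : Type := α ⊕ Bool

/-- The symbol held in cell `i` of the tape containing `▷x◁`. -/
def tapeAt {α : Type} (x : List α) (i : ℕ) : TapeSym α :=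
  if h0 : i = 0 then Sum.inr false
  else if h : i ≤ x.length then Sum.inl (x.get ⟨i - 1, by omega⟩)
  else Sum.inr true

structure TwoNFA (α : Type) : Type 1 where
  Q : Type
  [finQ : Fintype Q]
  start : Q
  acc : Set Q
  rej : Set Q
  acc_rej_disj : Disjoint acc rej
  next : Q → TapeSym α → Set (Q × ℤ)
  next_dir : ∀ q a t, t ∈ next q a → t.2 = -1 ∨ t.2 = 0 ∨ t.2 = 1

attribute [instance] TwoNFA.finQ

namespace TwoNFA

variable {α : Type}

def sc (M : TwoNFA α) : ℕ := Fintype.card M.Q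

def Halting (M : TwoNFA α) (q : M.Q) : Prop := q ∈ M.acc ∨ q ∈ M.rej

/-- Configuration `c` yields configuration `c'` in one step on input `x`. -/
def Yields (M : TwoNFA α) (x : List α) (c c' : M.Q × ℕ) : Prop :=
  ¬ M.Halting c.1 ∧ c.2 ≤ x.length + 1 ∧ c'.2 ≤ x.length + 1 ∧
    ∃ d : ℤ, (c'.1, d) ∈ M.next c.1 (tapeAt x c.2) ∧ (c'.2 : ℤ) = (c.2 : ℤ) + d

/-- A partial computation path of length `k` of `M` on `x`. -/
def IsPartialPath (M : TwoNFA α) (x : List α) (k : ℕ) (p : Fin (k + 1) → M.Q × ℕ) : Prop :=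
  p 0 = (M.start, 0) ∧ ∀ i : Fin k, M.Yields x (p i.castSucc) (p i.succ)

/-- A (full) computation path: the final configuration is the only halting one. -/
def IsCompPath (M : TwoNFA α) (x : List α) (k : ℕ) (p : Fin (k + 1) → M.Q × ℕ) : Prop :=
  M.IsPartialPath x k p ∧ ∀ i : Fin (k + 1), (M.Halting (p i).1 ↔ i = Fin.last k)

def IsAccPath (M : TwoNFA α) (x : List α) (k : ℕ) (p : Fin (k + 1) → M.Q × ℕ) : Prop :=
  M.IsCompPath x k p ∧ (p (Fin.last k)).1 ∈ M.acc

def Accepts (M : TwoNFA α) (x : List α) : Prop := ∃ k p, M.IsAccPath x k p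

def Deterministic (M : TwoNFA α) : Prop := ∀ q a, ∃ t, M.next q a = {t}

/-- The set of accepting computation paths of `M` on `x`. -/
def accPaths (M : TwoNFA α) (x : List α) : Set ((k : ℕ) × (Fin (k + 1) → M.Q × ℕ)) :=
  {kp | M.IsAccPath x kp.1 kp.2}

/-- The set of computation paths of `M` on `x` ending at configuration `conf`. -/
def compPathsTo (M : TwoNFA α) (x : List α) (conf : M.Q × ℕ) :
    Set ((k : ℕ) × (Fin (k + 1) → M.Q × ℕ)) :=
  {kp | M.IsCompPath x kp.1 kp.2 ∧ kp.2 (Fin.last kp.1) = conf}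

/-- The set of partial computation paths of `M` on `x` ending at configuration `conf`. -/
def partialPathsTo (M : TwoNFA α) (x : List α) (conf : M.Q × ℕ) :
    Set ((k : ℕ) × (Fin (k + 1) → M.Q × ℕ)) :=
  {kp | M.IsPartialPath x kp.1 kp.2 ∧ kp.2 (Fin.last kp.1) = conf}

end TwoNFA

/-! ## Two-way machine families -/

def Solves2 {α : Type} (M : ℕ → TwoNFA α) (L : PromiseFamily α) : Prop :=
  ∀ n, (∀ x ∈ L.pos n, (M n).Accepts x) ∧ (∀ x ∈ L.neg n, ¬ (M n).Accepts x)

def PolySize2 {α : Type} (M : ℕ → TwoNFA α) : Prop :=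
  ∃ p : Polynomial ℕ, ∀ n, (M n).sc ≤ p.eval n

def Unambiguous2 {α : Type} (M : ℕ → TwoNFA α) (L : PromiseFamily α) : Prop :=
  ∀ n, ∀ x ∈ L.valid n, ((M n).accPaths x).Subsingleton

def AcceptFew2 {α : Type} (M : ℕ → TwoNFA α) (L : PromiseFamily α) : Prop :=
  ∃ P : MvPolynomial (Fin 2) ℕ, ∀ n, ∀ x ∈ L.valid n,
    ((M n).accPaths x).encard ≤ (MvPolynomial.eval ![n, x.length] P : ℕ∞)

def WeaklyUnambiguous2 {α : Type} (M : ℕ → TwoNFA α) (L : PromiseFamily α) : Prop :=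
  ∀ n, ∀ x ∈ L.valid n, ∀ conf : (M n).Q × ℕ, conf.1 ∈ (M n).acc →
    ((M n).compPathsTo x conf).Subsingleton

def ReachUnambiguous2 {α : Type} (M : ℕ → TwoNFA α) (L : PromiseFamily α) : Prop :=
  ∀ n, ∀ x ∈ L.valid n, ∀ conf : (M n).Q × ℕ,
    ((M n).partialPathsTo x conf).Subsingleton

def ReachFew2 {α : Type} (M : ℕ → TwoNFA α) (L : PromiseFamily α) : Prop :=
  ∃ P : MvPolynomial (Fin 2) ℕ, ∀ n, ∀ x ∈ L.valid n, ∀ conf : (M n).Q × ℕ,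
    ((M n).partialPathsTo x conf).encard ≤ (MvPolynomial.eval ![n, x.length] P : ℕ∞)

/-! ## Two-way nonuniform state complexity classes -/

def twoN : Set Family :=
  {F | ∃ M : ℕ → TwoNFA F.alph, PolySize2 M ∧ Solves2 M F.prob}

def twoD : Set Family :=
  {F | ∃ M : ℕ → TwoNFA F.alph, PolySize2 M ∧ (∀ n, (M n).Deterministic) ∧ Solves2 M F.prob}

def twoU : Set Family :=
  {F | ∃ M : ℕ → TwoNFA F.alph, PolySize2 M ∧ Unambiguous2 M F.prob ∧ Solves2 M F.prob}

def twoFew : Set Family :=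
  {F | ∃ M : ℕ → TwoNFA F.alph, PolySize2 M ∧ AcceptFew2 M F.prob ∧ Solves2 M F.prob}

def twoFewU : Set Family :=
  {F | ∃ M : ℕ → TwoNFA F.alph, PolySize2 M ∧ AcceptFew2 M F.prob ∧
        WeaklyUnambiguous2 M F.prob ∧ Solves2 M F.prob}

def twoReachU : Set Family :=
  {F | ∃ M : ℕ → TwoNFA F.alph, PolySize2 M ∧ AcceptFew2 M F.prob ∧
        ReachUnambiguous2 M F.prob ∧ Solves2 M F.prob}

def twoReachFew : Set Family :=
  {F | ∃ M : ℕ → TwoNFA F.alph, PolySize2 M ∧ AcceptFew2 M F.prob ∧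
        ReachFew2 M F.prob ∧ Solves2 M F.prob}

def twoReachFewU : Set Family :=
  {F | ∃ M : ℕ → TwoNFA F.alph, PolySize2 M ∧ AcceptFew2 M F.prob ∧
        ReachFew2 M F.prob ∧ WeaklyUnambiguous2 M F.prob ∧ Solves2 M F.prob}

/-! ## Ceilings -/

/-- The family `F` has an `f(n)`-ceiling. -/
def HasCeiling (F : Family) (f : ℕ → ℕ) : Prop :=
  ∀ n, ∀ x ∈ F.prob.valid n, x.length ≤ f n

/-- The restriction `C/F` of a class `C` to families having an `f`-ceiling for some `f ∈ S`. -/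
def ceil (C : Set Family) (S : Set (ℕ → ℕ)) : Set Family :=
  {F | F ∈ C ∧ ∃ f ∈ S, HasCeiling F f}

def polyFuns : Set (ℕ → ℕ) := {f | ∃ p : Polynomial ℕ, ∀ n, f n = p.eval n}

/-- Super-exponential functions: `f(n) > 2^{p(n)}` for all but finitely many `n`,
for every polynomial `p`. -/
def supexpFuns : Set (ℕ → ℕ) :=
  {f | ∀ p : Polynomial ℕ, ∃ N, ∀ n ≥ N, 2 ^ p.eval n < f n}

/-- `F` has a logarithmic ceiling `ℓ(n) = a·log₂ n + b` with constants `a, b ≥ 0`. -/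
def HasLogCeiling (F : Family) : Prop :=
  ∃ a b : ℝ, 0 ≤ a ∧ 0 ≤ b ∧
    ∀ n, ∀ x ∈ F.prob.valid n, (x.length : ℝ) ≤ a * Real.logb 2 n + b

/-- The restriction `C/log` of a class `C` to families having logarithmic ceilings. -/
def ceilLog (C : Set Family) : Set Family := {F | F ∈ C ∧ HasLogCeiling F}
/-! ## The alphabet `{0, 1, #}` and encodings -/

inductive Sym3 : Type
  | zero | one | hash
deriving DecidableEq

instance : Fintype Sym3 :=
  ⟨{Sym3.zero, Sym3.one, Sym3.hash}, by intro x; cases x <;> simp⟩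

/-- The block `1^i 0^{m-i}`. -/
def block (m i : ℕ) : List Sym3 :=
  List.replicate i Sym3.one ++ List.replicate (m - i) Sym3.zero

lemma block_length {m i : ℕ} (h : i ≤ m) : (block m i).length = m := by
  simp [block]; omega

lemma block_count {m : ℕ} (i : ℕ) : (block m i).count Sym3.one = i := by
  simp [block, List.count_append, List.count_replicate]

lemma block_inj {m i j : ℕ} (h : block m i = block m j) : i = j := by
  have := block_count (m := m) i
  rw [h, block_count] at this
  omega

/-- The encoding `[[i₁,…,i_k]]_m` of a list of numbers. -/
def enc (m : ℕ) : List ℕ → List Sym3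
  | [] => []
  | [i] => block m i
  | i :: j :: rest => block m i ++ Sym3.zero :: enc m (j :: rest)

/-- Lists of length `k` with entries in `[n]`. -/
def ValidList (n k : ℕ) (l : List ℕ) : Prop :=
  l.length = k ∧ ∀ i ∈ l, 1 ≤ i ∧ i ≤ n

lemma enc_length {m : ℕ} :
    ∀ l : List ℕ, (∀ i ∈ l, i ≤ m) → (enc m l).length = l.length * (m + 1) - 1
  | [] => by simp [enc]
  | [i] => by
      intro h
      simp [enc, block_length (h i (by simp))]
  | i :: j :: rest => by
      intro h
      have ih := enc_length (j :: rest) (fun a ha => h a (List.mem_cons_of_mem _ ha))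
      have hb : (block m i).length = m := block_length (h i List.mem_cons_self)
      show (block m i ++ Sym3.zero :: enc m (j :: rest)).length = _
      rw [List.length_append, hb, List.length_cons, ih]
      have hc : (i :: j :: rest).length = (j :: rest).length + 1 := by simp
      rw [hc]
      set L := (j :: rest).length with hLdef
      have hL : 1 ≤ L := by simp [hLdef]
      have h1 : (L + 1) * (m + 1) = L * (m + 1) + (m + 1) := by ring
      rw [h1]
      set P := L * (m + 1) with hPdef
      have hP : 1 ≤ P := by
        have := Nat.mul_le_mul hL (Nat.le_add_left 1 m)
        simpa [hPdef] using this
      omega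

lemma enc_ne_nil {m : ℕ} (i : ℕ) (rest : List ℕ) (hi : 1 ≤ i) :
    enc m (i :: rest) ≠ [] := by
  cases rest with
  | nil =>
      simp only [enc, block]
      intro h
      have := congrArg List.length h
      simp at this
      omega
  | cons j rest' =>
      simp only [enc]
      intro h
      have := congrArg List.length h
      simp at this

lemma enc_inj {m : ℕ} :
    ∀ u w : List ℕ, (∀ i ∈ u, 1 ≤ i ∧ i ≤ m) → (∀ i ∈ w, 1 ≤ i ∧ i ≤ m) →
      enc m u = enc m w → u = w
  | [], [], _, _, _ => rfl
  | [], j :: w', _, hw, h => by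
      exact absurd h.symm (enc_ne_nil j w' (hw j (by simp)).1)
  | i :: u', [], hu, _, h => by
      exact absurd h (enc_ne_nil i u' (hu i (by simp)).1)
  | [i], [j], hu, hw, h => by
      simp only [enc] at h
      rw [block_inj h]
  | [i], j :: b :: w', hu, hw, h => by
      exfalso
      have hl := congrArg List.length h
      rw [show enc m [i] = block m i from rfl,
        show enc m (j :: b :: w') = block m j ++ Sym3.zero :: enc m (b :: w') from rfl] at hl
      rw [List.length_append, List.length_cons,
        block_length (hu i (by simp)).2, block_length (hw j (by simp)).2] at hl
      omega
  | i :: a :: u', [j], hu, hw, h => by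
      exfalso
      have hl := congrArg List.length h
      rw [show enc m [j] = block m j from rfl,
        show enc m (i :: a :: u') = block m i ++ Sym3.zero :: enc m (a :: u') from rfl] at hl
      rw [List.length_append, List.length_cons,
        block_length (hu i (by simp)).2, block_length (hw j (by simp)).2] at hl
      omega
  | i :: a :: u', j :: b :: w', hu, hw, h => by
      rw [show enc m (i :: a :: u') = block m i ++ Sym3.zero :: enc m (a :: u') from rfl,
        show enc m (j :: b :: w') = block m j ++ Sym3.zero :: enc m (b :: w') from rfl] at h
      have hlen : (block m i).length = (block m j).length := by
        rw [block_length (hu i (by simp)).2, block_length (hw j (by simp)).2]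
      obtain ⟨h1, h2⟩ := List.append_inj h hlen
      have h3 : enc m (a :: u') = enc m (b :: w') := by
        simpa using h2
      have ih := enc_inj (a :: u') (b :: w')
        (fun x hx => hu x (List.mem_cons_of_mem _ hx))
        (fun x hx => hw x (List.mem_cons_of_mem _ hx)) h3
      rw [block_inj h1, ih]
/-! ## The promise problem family `L₁` -/

def L1pos (n : ℕ) : Set (List Sym3) :=
  {x | ∃ u v : List ℕ, ValidList n n u ∧ ValidList n n v ∧ u ≠ v ∧
        x = enc n u ++ Sym3.hash :: enc n v}

def L1neg (n : ℕ) : Set (List Sym3) :=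
  {x | ∃ u v : List ℕ, ValidList n n u ∧ ValidList n n v ∧ u = v ∧
        x = enc n u ++ Sym3.hash :: enc n v}

lemma L1_disj (n : ℕ) : Disjoint (L1pos n) (L1neg n) := by
  rw [Set.disjoint_left]
  rintro x ⟨u, v, hu, hv, huv, rfl⟩ ⟨u', v', hu', hv', huv', heq⟩
  have hlen : (enc n u).length = (enc n u').length := by
    rw [enc_length u (fun i hi => (hu.2 i hi).2),
      enc_length u' (fun i hi => (hu'.2 i hi).2), hu.1, hu'.1]
  obtain ⟨h1, h2⟩ := List.append_inj heq hlen
  have h2' : enc n v = enc n v' := by simpa using h2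
  have e1 : u = u' := enc_inj u u' hu.2 hu'.2 h1
  have e2 : v = v' := enc_inj v v' hv.2 hv'.2 h2'
  exact huv (by rw [e1, e2, huv'])

def L1prob : PromiseFamily Sym3 := ⟨L1pos, L1neg, L1_disj⟩

def L1fam : Family := { alph := Sym3, prob := L1prob }

/-! ## Matrices, their encodings, and the promise problem family `L₂` -/

/-- `R` represents an `n × n` matrix with entries in `[n]`, given as its list of rows. -/
def ValidMat (n : ℕ) (R : List (List ℕ)) : Prop :=
  R.length = n ∧ ∀ r ∈ R, ValidList n n r

/-- The encoding `[[D]]_n` of a matrix: its encoded rows joined by `#`. -/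
def encMat (n : ℕ) : List (List ℕ) → List Sym3
  | [] => []
  | [r] => enc n r
  | r :: s :: rest => enc n r ++ Sym3.hash :: encMat n (s :: rest)

lemma encMat_len {n : ℕ} :
    ∀ R : List (List ℕ), (∀ r ∈ R, ValidList n n r) →
      (encMat n R).length = R.length * (n * (n + 1) - 1 + 1) - 1
  | [] => by simp [encMat]
  | [r] => by
      intro h
      have hr := h r (by simp)
      have he : (enc n r).length = n * (n + 1) - 1 := by
        rw [enc_length r (fun i hi => (hr.2 i hi).2), hr.1]
      show (enc n r).length = ([r] : List (List ℕ)).length * (n * (n + 1) - 1 + 1) - 1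
      rw [he, show ([r] : List (List ℕ)).length = 1 from rfl]
      omega
  | r :: s :: rest => by
      intro h
      have ih := encMat_len (s :: rest) (fun a ha => h a (List.mem_cons_of_mem _ ha))
      have hr := h r (by simp)
      have he : (enc n r).length = n * (n + 1) - 1 := by
        rw [enc_length r (fun i hi => (hr.2 i hi).2), hr.1]
      show (enc n r ++ Sym3.hash :: encMat n (s :: rest)).length = _
      rw [List.length_append, he, List.length_cons, ih]
      have hc : (r :: s :: rest).length = (s :: rest).length + 1 := by simp
      rw [hc]
      set e := n * (n + 1) - 1 with hedef
      set L := (s :: rest).length with hLdef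
      have hL : 1 ≤ L := by simp [hLdef]
      have h1 : (L + 1) * (e + 1) = L * (e + 1) + (e + 1) := by ring
      rw [h1]
      set P := L * (e + 1) with hPdef
      have hP : 1 ≤ P := by
        calc 1 = 1 * 1 := by ring
        _ ≤ L * (e + 1) := Nat.mul_le_mul hL (by omega)
      omega

lemma encMat_inj {n : ℕ} :
    ∀ R W : List (List ℕ), (∀ r ∈ R, ValidList n n r) → (∀ r ∈ W, ValidList n n r) →
      R.length = W.length → encMat n R = encMat n W → R = W
  | [], [], _, _, _, _ => rfl
  | [], _ :: _, _, _, hl, _ => by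
      simp only [List.length_cons, List.length_nil] at hl
      omega
  | _ :: _, [], _, _, hl, _ => by
      simp only [List.length_cons, List.length_nil] at hl
      omega
  | [r], [w], hR, hW, _, h => by
      have := enc_inj r w (hR r (by simp)).2 (hW w (by simp)).2 h
      rw [this]
  | [r], w :: w' :: W', _, _, hl, _ => by
      simp only [List.length_cons, List.length_nil] at hl
      omega
  | r :: r' :: R', [w], _, _, hl, _ => by
      simp only [List.length_cons, List.length_nil] at hl
      omega
  | r :: r' :: R', w :: w' :: W', hR, hW, hl, h => by
      rw [show encMat n (r :: r' :: R') = enc n r ++ Sym3.hash :: encMat n (r' :: R') from rfl,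
        show encMat n (w :: w' :: W') = enc n w ++ Sym3.hash :: encMat n (w' :: W') from rfl] at h
      have hrlen : (enc n r).length = (enc n w).length := by
        have h1 := hR r (by simp); have h2 := hW w (by simp)
        rw [enc_length r (fun i hi => (h1.2 i hi).2),
          enc_length w (fun i hi => (h2.2 i hi).2), h1.1, h2.1]
      obtain ⟨h1, h2⟩ := List.append_inj h hrlen
      have h3 : encMat n (r' :: R') = encMat n (w' :: W') := by simpa using h2
      have ihr := enc_inj r w (hR r (by simp)).2 (hW w (by simp)).2 h1
      have ih := encMat_inj (r' :: R') (w' :: W')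
        (fun a ha => hR a (List.mem_cons_of_mem _ ha))
        (fun a ha => hW a (List.mem_cons_of_mem _ ha))
        (by simpa using hl) h3
      rw [ihr, ih]

/-- `SelSum R s` holds iff `s` is obtained by choosing one entry from each row of `R`
(the value `sum_D(σ)` for some choice function `σ`). -/
inductive SelSum : List (List ℕ) → ℕ → Prop
  | nil : SelSum [] 0
  | cons {a : ℕ} {r : List ℕ} {rest : List (List ℕ)} {s : ℕ} :
      a ∈ r → SelSum rest s → SelSum (r :: rest) (a + s)

def L2pos (n : ℕ) : Set (List Sym3) :=
  {x | ∃ R R' : List (List ℕ), ValidMat n R ∧ ValidMat n R' ∧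
        (∃ s : ℕ, SelSum R s ∧ SelSum R' s) ∧
        x = encMat n R ++ Sym3.hash :: Sym3.hash :: encMat n R'}

def L2neg (n : ℕ) : Set (List Sym3) :=
  {x | ∃ R R' : List (List ℕ), ValidMat n R ∧ ValidMat n R' ∧
        (∀ s s' : ℕ, SelSum R s → SelSum R' s' → s ≠ s') ∧
        x = encMat n R ++ Sym3.hash :: Sym3.hash :: encMat n R'}

lemma L2_disj (n : ℕ) : Disjoint (L2pos n) (L2neg n) := by
  rw [Set.disjoint_left]
  rintro x ⟨R, R', hR, hR', ⟨s, hs, hs'⟩, rfl⟩ ⟨W, W', hW, hW', hne, heq⟩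
  have hlen : (encMat n R).length = (encMat n W).length := by
    rw [encMat_len R hR.2, encMat_len W hW.2, hR.1, hW.1]
  obtain ⟨h1, h2⟩ := List.append_inj heq hlen
  have h2' : encMat n R' = encMat n W' := by simpa using h2
  have e1 : R = W := encMat_inj R W hR.2 hW.2 (by rw [hR.1, hW.1]) h1
  have e2 : R' = W' := encMat_inj R' W' hR'.2 hW'.2 (by rw [hR'.1, hW'.1]) h2'
  exact hne s s (e1 ▸ hs) (e2 ▸ hs') rfl

def L2prob : PromiseFamily Sym3 := ⟨L2pos, L2neg, L2_disj⟩

def L2fam : Family := { alph := Sym3, prob := L2prob }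
/-! ## One-way probabilistic finite automata data -/

/-- Product of the matrices of the symbols of a word. -/
noncomputable def wordMatrix {α Q : Type} [Fintype Q] [DecidableEq Q]
    (Mσ : TapeSym α → Matrix Q Q ℝ) (w : List (TapeSym α)) : Matrix Q Q ℝ :=
  (w.map Mσ).prod

/-- The tape word `▷ x ◁`. -/
def tapeWord {α : Type} (x : List α) : List (TapeSym α) :=
  Sum.inr false :: (x.map Sum.inl ++ [Sum.inr true])

/-- `p_{acc}(x : q)`: the `q`-entry of the row vector `ν · M_{▷x◁}`. -/
noncomputable def pacc {α Q : Type} [Fintype Q] [DecidableEq Q]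
    (ν : Q → ℝ) (Mσ : TapeSym α → Matrix Q Q ℝ) (x : List α) (q : Q) : ℝ :=
  Matrix.vecMul ν (wordMatrix Mσ (tapeWord x)) q
namespace NonClosure

/-! ### The machine -/

abbrev Dat (n : ℕ) := Option (Fin n × Bool × Bool)
abbrev Qt (n : ℕ) := Fin (2*n+1) × Dat n

def inc {n : ℕ} (i : Fin (2*n+1)) : Fin (2*n+1) :=
  if h : i.val < 2*n then ⟨i.val+1, by omega⟩ else i

def nxtD {n : ℕ} (i : Fin (2*n+1)) (d : Dat n) (a : Bool) : Set (Qt n) :=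
  match d with
  | none =>
      if h : i.val < n then
        {(inc i, none), (inc i, some (⟨i.val, h⟩, a, false))}
      else {(inc i, none)}
  | some (j, b, c) =>
      {(inc i, some (j, b, c || (decide (i.val = n + j.val) && decide (a ≠ b))))}

def Mach (n : ℕ) : OneNFA Bool where
  Q := Qt n
  start := (⟨0, by omega⟩, none)
  next := fun q a => nxtD q.1 q.2 a
  next_nonempty := by
    rintro ⟨i, (_ | ⟨j, b, c⟩)⟩ a
    · show (nxtD i none a).Nonempty
      rw [nxtD]
      split <;> simp
    · exact ⟨_, rfl⟩
  acc := {q | ∃ j b, q.2 = some (j, b, true)}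

lemma mem_nxt_none {n : ℕ} (i : Fin (2*n+1)) (a : Bool) :
    ((inc i, none) : Qt n) ∈ nxtD i none a := by
  rw [nxtD]; split <;> simp

lemma mem_nxt_guess {n : ℕ} (i : Fin (2*n+1)) (h : i.val < n) (a : Bool) :
    ((inc i, some (⟨i.val, h⟩, a, false)) : Qt n) ∈ nxtD i none a := by
  rw [nxtD]
  simp only [h, dif_pos]
  right; rfl

lemma mem_nxt_some {n : ℕ} (i : Fin (2*n+1)) (j : Fin n) (b c : Bool) (a : Bool) :
    ((inc i, some (j, b, c || (decide (i.val = n + j.val) && decide (a ≠ b)))) : Qt n)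
      ∈ nxtD i (some (j, b, c)) a := rfl

/-- Elimination principle for transitions. -/
lemma nxt_elim {n : ℕ} {q q' : Qt n} {a : Bool} (h : q' ∈ (Mach n).next q a) :
    q'.1 = inc q.1 ∧
      ((q.2 = none ∧ (q'.2 = none ∨
          ∃ h : q.1.val < n, q'.2 = some (⟨q.1.val, h⟩, a, false))) ∨
        (∃ j b c, q.2 = some (j, b, c) ∧
          q'.2 = some (j, b, c || (decide (q.1.val = n + j.val) && decide (a ≠ b))))) := by
  rcases q with ⟨i, (_ | ⟨j, b, c⟩)⟩
  · replace h : q' ∈ nxtD i none a := h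
    rw [nxtD] at h
    split at h
    · rcases h with h | h <;> subst h
      · exact ⟨rfl, Or.inl ⟨rfl, Or.inl rfl⟩⟩
      · exact ⟨rfl, Or.inl ⟨rfl, Or.inr ⟨‹_›, rfl⟩⟩⟩
    · rw [Set.mem_singleton_iff] at h
      subst h
      exact ⟨rfl, Or.inl ⟨rfl, Or.inl rfl⟩⟩
  · replace h : q' ∈ nxtD i (some (j, b, c)) a := h
    rw [show nxtD i (some (j, b, c)) a =
        {(inc i, some (j, b, c || (decide (i.val = n + j.val) && decide (a ≠ b))))} from rfl,
      Set.mem_singleton_iff] at h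
    subst h
    exact ⟨rfl, Or.inr ⟨j, b, c, rfl, rfl⟩⟩

end NonClosure
namespace NonClosure

/-! ### Invariants -/

def InvC (n i : ℕ) (q : Qt n) : Prop :=
  q.1.val = i ∧ ∀ j b c, q.2 = some (j, b, c) → j.val < i ∧ (c = true → n + j.val < i)

def InvS (n : ℕ) (y : List Bool) (i : ℕ) (q : Qt n) : Prop :=
  InvC n i q ∧ ∀ j b c, q.2 = some (j, b, c) →
    b = y.getD j.val false ∧ (c = true → y.getD (n + j.val) false ≠ b)

lemma inv_of_path {n : ℕ} {y : List Bool} (hy : y.length ≤ 2*n)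
    {p : Fin (y.length+1) → (Mach n).Q} (hp : (Mach n).IsPath y p) :
    ∀ i : Fin (y.length+1), InvS n y i.val (p i) := by
  intro i
  induction i using Fin.induction with
  | zero =>
      rw [hp.1]
      exact ⟨⟨rfl, by simp [Mach]⟩, by simp [Mach]⟩
  | succ i ih =>
      obtain ⟨⟨hcnt, hC⟩, hS⟩ := ih
      have hstep := hp.2 i
      obtain ⟨h1, h2⟩ := nxt_elim hstep
      have hlt : i.val < 2*n := by have := i.isLt; omega
      rw [Fin.coe_castSucc] at hcnt
      simp only [Fin.coe_castSucc] at hC hS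
      have hcnt' : (p i.succ).1.val = i.val + 1 := by
        rw [h1, inc, dif_pos (by omega : (p i.castSucc).1.val < 2*n)]
        simp [hcnt]
      have hiy : i.val < y.length := i.isLt
      have hgetD : y.getD i.val false = y.get i := by
        rw [List.getD_eq_getElem y false hiy, List.get_eq_getElem]
      rw [Fin.val_succ]
      rcases h2 with ⟨hnone, hcase⟩ | ⟨j, b, c, hsome, htgt⟩
      · rcases hcase with h | ⟨hn, h⟩
        · exact ⟨⟨hcnt', by simp [h]⟩, by simp [h]⟩
        · refine ⟨⟨hcnt', ?_⟩, ?_⟩ <;> intro j b c hjbc <;> rw [h] at hjbc <;>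
            simp only [Option.some.injEq, Prod.mk.injEq] at hjbc <;>
            obtain ⟨e1, e2, e3⟩ := hjbc
          · constructor
            · rw [← e1]; simp [hcnt]
            · intro hc; rw [← e3] at hc; exact absurd hc (by simp)
          · constructor
            · rw [← e2, ← e1]
              simp only [hcnt, hgetD]
            · intro hc; rw [← e3] at hc; exact absurd hc (by simp)
      · have hCold := hC j b c hsome
        have hSold := hS j b c hsome
        refine ⟨⟨hcnt', ?_⟩, ?_⟩ <;> intro j' b' c' hjbc <;> rw [htgt] at hjbc <;>
          simp only [Option.some.injEq, Prod.mk.injEq] at hjbc <;>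
          obtain ⟨e1, e2, e3⟩ := hjbc
        · refine ⟨by rw [← e1]; omega, ?_⟩
          intro hc
          rw [← e3] at hc
          rcases Bool.or_eq_true_iff.mp hc with hc | hc
          · have := hCold.2 hc; omega
          · have := (Bool.and_eq_true_iff.mp hc).1
            have : (p i.castSucc).1.val = n + j.val := of_decide_eq_true this
            rw [← e1]; omega
        · refine ⟨by rw [← e2, ← e1]; exact hSold.1, ?_⟩
          intro hc
          rw [← e3] at hc
          rw [← e1, ← e2]
          rcases Bool.or_eq_true_iff.mp hc with hc | hc
          · exact hSold.2 hc
          · obtain ⟨hd1, hd2⟩ := Bool.and_eq_true_iff.mp hc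
            have hd1 : (p i.castSucc).1.val = n + j.val := of_decide_eq_true hd1
            have hd2 : y.get i ≠ b := of_decide_eq_true hd2
            rw [← hd1, hcnt, hgetD]
            exact hd2

end NonClosure
namespace NonClosure

/-! ### Backward determinism and path uniqueness -/

lemma back {n i : ℕ} {s s' q : Qt n} {a : Bool}
    (hs : InvC n i s) (hs' : InvC n i s')
    (h : q ∈ (Mach n).next s a) (h' : q ∈ (Mach n).next s' a) : s = s' := by
  obtain ⟨_, h2⟩ := nxt_elim h
  obtain ⟨_, h2'⟩ := nxt_elim h'
  have hfst : s.1 = s'.1 := Fin.ext (by rw [hs.1, hs'.1])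
  have key : ∀ {t t' : Qt n}, InvC n i t → InvC n i t' →
      (t.2 = none ∧ (q.2 = none ∨ ∃ h : t.1.val < n, q.2 = some (⟨t.1.val, h⟩, a, false))) →
      (∃ j b c, t'.2 = some (j, b, c) ∧
        q.2 = some (j, b, c || (decide (t'.1.val = n + j.val) && decide (a ≠ b)))) → False := by
    rintro t t' ht ht' ⟨-, hq⟩ ⟨j, b, c, hsome, hq'⟩
    rcases hq with hq | ⟨hn, hq⟩
    · rw [hq'] at hq; simp at hq
    · rw [hq'] at hq
      simp only [Option.some.injEq, Prod.mk.injEq] at hq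
      have hj : j.val < i := (ht'.2 j b c hsome).1
      have : j.val = t.1.val := by rw [hq.1]
      rw [ht.1] at this
      omega
  rcases h2 with hA | hA <;> rcases h2' with hB | hB
  · -- both from none
    refine Prod.ext hfst ?_
    rw [hA.1, hB.1]
  · exact (key hs hs' hA hB).elim
  · exact (key hs' hs hB hA).elim
  · -- both carry
    obtain ⟨j, b, c, hsome, htgt⟩ := hA
    obtain ⟨j', b', c', hsome', htgt'⟩ := hB
    rw [htgt] at htgt'
    simp only [Option.some.injEq, Prod.mk.injEq] at htgt'
    obtain ⟨ej, eb, ec⟩ := htgt'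
    have ejv : j.val = j'.val := by rw [ej]
    rw [← ej, ← eb] at ec
    have hcc : c = c' := by
      by_cases hg : s.1.val = n + j.val
      · cases c <;> cases c'
        · rfl
        · exfalso
          have h1 := (hs'.2 j' b' true hsome').2 rfl
          have h2 := hs.1; have h3 := hs'.1
          omega
        · exfalso
          have h1 := (hs.2 j b true hsome).2 rfl
          have h2 := hs.1
          omega
        · rfl
      · have hg' : ¬ s'.1.val = n + j.val := by rw [hs'.1, ← hs.1]; exact hg
        simpa [hg, hg'] using ec
    refine Prod.ext hfst ?_
    rw [hsome, hsome', ← ej, ← eb, hcc]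

lemma path_unique {n : ℕ} {y : List Bool} (hy : y.length ≤ 2*n)
    {p p' : Fin (y.length+1) → (Mach n).Q}
    (hp : (Mach n).IsPath y p) (hp' : (Mach n).IsPath y p')
    (hlast : p (Fin.last y.length) = p' (Fin.last y.length)) : p = p' := by
  have key : ∀ t, p ⟨y.length - t, by omega⟩ = p' ⟨y.length - t, by omega⟩ := by
    intro t
    induction t with
    | zero => simpa [Fin.last] using hlast
    | succ t ih =>
        by_cases ht : t < y.length
        · set fi : Fin y.length := ⟨y.length - (t+1), by omega⟩ with hfi
          have e1 : fi.castSucc = (⟨y.length - (t+1), by omega⟩ : Fin (y.length+1)) := rfl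
          have e2 : fi.succ = (⟨y.length - t, by omega⟩ : Fin (y.length+1)) := by
            apply Fin.ext; simp [hfi]; omega
          have hq : p fi.succ = p' fi.succ := by rw [e2]; exact ih
          have hstep := hp.2 fi
          have hstep' := hp'.2 fi
          rw [hq] at hstep
          have hinv := (inv_of_path hy hp fi.castSucc).1
          have hinv' := (inv_of_path hy hp' fi.castSucc).1
          rw [← e1]
          exact back hinv hinv' hstep hstep'
        · have e : y.length - (t+1) = y.length - t := by omega
          simpa [e] using ih
  funext i
  have := key (y.length - i.val)
  have e : (⟨y.length - (y.length - i.val), by omega⟩ : Fin (y.length+1)) = i := by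
    apply Fin.ext; simp; omega
  rwa [e] at this

end NonClosure
namespace NonClosure

/-! ### The promise family -/

def Fpos (n : ℕ) : Set (List Bool) :=
  {x | ∃ u v : List Bool, u.length = n ∧ v.length = n ∧ u ≠ v ∧ x = u ++ v}

def Fneg (n : ℕ) : Set (List Bool) :=
  {x | ∃ u : List Bool, u.length = n ∧ x = u ++ u}

set_option maxHeartbeats 1000000 in
lemma accepts_pos {n : ℕ} {x : List Bool} (hx : x ∈ Fpos n) : (Mach n).Accepts x := by
  obtain ⟨u, v, hu, hv, hne, rfl⟩ := hx
  have hx2 : (u ++ v).length = 2*n := by simp [hu, hv]; omega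
  have hj : ∃ j : ℕ, ∃ hjn : j < n, u[j]'(by omega) ≠ v[j]'(by omega) := by
    by_contra hall
    push_neg at hall
    exact hne (List.ext_getElem (by omega) fun i h1 h2 => hall i (by omega))
  obtain ⟨j, hjn, hne2⟩ := hj
  refine ⟨fun i => (⟨i.val, by have := i.isLt; omega⟩,
    if i.val ≤ j then none
    else some (⟨j, hjn⟩, u[j]'(by omega), decide (n + j + 1 ≤ i.val))), ⟨?_, ?_⟩, ?_⟩
  · simp [Mach, Fin.ext_iff]
  · intro i
    have hiv : i.val < 2*n := by have := i.isLt; omega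
    simp only [Fin.coe_castSucc, Fin.val_succ]
    have hinc : inc (⟨i.val, by omega⟩ : Fin (2*n+1)) = ⟨i.val + 1, by omega⟩ := by
      rw [inc, dif_pos (show (⟨i.val, by omega⟩ : Fin (2*n+1)).val < 2*n from hiv)]
    rcases Nat.lt_trichotomy i.val j with hc | hc | hc
    · rw [if_pos (by omega : i.val ≤ j), if_pos (by omega : i.val + 1 ≤ j)]
      have := mem_nxt_none (n := n) ⟨i.val, by omega⟩ ((u++v).get i)
      rwa [hinc] at this
    · subst hc
      rw [if_pos (le_refl _), if_neg (by omega)]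
      rw [show (decide (n + i.val + 1 ≤ i.val + 1)) = false from decide_eq_false (by omega)]
      have ha : (u ++ v).get i = u[i.val]'(by omega) := by
        rw [List.get_eq_getElem, List.getElem_append_left (by omega)]
      rw [← ha]
      have := mem_nxt_guess (n := n) ⟨i.val, by omega⟩ (by exact hjn) ((u++v).get i)
      rwa [hinc] at this
    · rw [if_neg (by omega), if_neg (by omega)]
      by_cases hd : i.val = n + j
      · have ha : (u ++ v).get i = v[j]'(by omega) := by
          rw [List.get_eq_getElem, List.getElem_append_right (by omega)]
          congr 1
          omega
        rw [show (decide (n + j + 1 ≤ i.val)) = false from decide_eq_false (by omega)]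
        rw [show (decide (n + j + 1 ≤ i.val + 1)) = true from decide_eq_true (by omega)]
        have hbool : (true : Bool) =
            (false || (decide ((⟨i.val, by omega⟩ : Fin (2*n+1)).val = n + (⟨j, hjn⟩ : Fin n).val)
              && decide ((u++v).get i ≠ u[j]'(by omega)))) := by
          have hvu : v[j]'(by omega) ≠ u[j]'(by omega) := Ne.symm hne2
          rw [ha]
          simp [hd, hvu]
        have hm := mem_nxt_some (n := n) ⟨i.val, by omega⟩ ⟨j, hjn⟩ (u[j]'(by omega)) false
          ((u++v).get i)
        rw [hinc, ← hbool] at hm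
        exact hm
      · have hbool : (decide (n + j + 1 ≤ i.val + 1)) =
            (decide (n + j + 1 ≤ i.val) ||
              (decide ((⟨i.val, by omega⟩ : Fin (2*n+1)).val = n + (⟨j, hjn⟩ : Fin n).val)
                && decide ((u++v).get i ≠ u[j]'(by omega)))) := by
          simp only [Fin.val_mk, decide_eq_false_iff_not.mpr hd, Bool.false_and, Bool.or_false]
          rw [decide_eq_decide]
          omega
        have hm := mem_nxt_some (n := n) ⟨i.val, by omega⟩ ⟨j, hjn⟩ (u[j]'(by omega))
          (decide (n + j + 1 ≤ i.val)) ((u++v).get i)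
        rw [hinc, ← hbool] at hm
        exact hm
  · show ∃ j' b, _ = some (j', b, true)
    simp only [Fin.val_last]
    rw [if_neg (by omega)]
    refine ⟨⟨j, hjn⟩, u[j]'(by omega), ?_⟩
    have hle : decide (n + j + 1 ≤ (u++v).length) = true := by
      simp only [decide_eq_true_eq, List.length_append]
      omega
    rw [hle]

lemma rejects_neg {n : ℕ} {x : List Bool} (hx : x ∈ Fneg n) : ¬ (Mach n).Accepts x := by
  rintro ⟨p, hpath, hacc⟩
  obtain ⟨u, hu, rfl⟩ := hx
  have hL : (u ++ u).length = 2*n := by simp [hu]; omega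
  obtain ⟨j, b, hsome⟩ := hacc
  have hinv := inv_of_path (by omega) hpath (Fin.last _)
  have h1 := hinv.1.2 j b true hsome
  have h2 := hinv.2 j b true hsome
  rw [Fin.val_last] at h1
  have hjn : j.val < n := by omega
  have e1 : (u ++ u).getD j.val false = u[j.val]'(by omega) := by
    rw [List.getD_eq_getElem _ false (by omega), List.getElem_append_left (by omega)]
  have e2 : (u ++ u).getD (n + j.val) false = u[j.val]'(by omega) := by
    rw [List.getD_eq_getElem _ false (by omega), List.getElem_append_right (by omega)]
    congr 1
    omega
  rw [e1] at h2
  rw [e2] at h2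
  exact h2.2 rfl h2.1.symm

def Fprob : PromiseFamily Bool :=
  ⟨Fpos, Fneg, fun n => Set.disjoint_left.mpr fun _ hp hn => rejects_neg hn (accepts_pos hp)⟩

def Ffam : Family := { alph := Bool, prob := Fprob }

lemma valid_len {n : ℕ} {x : List Bool} (hx : x ∈ Fprob.valid n) : x.length = 2*n := by
  rcases hx with ⟨u, v, hu, hv, -, rfl⟩ | ⟨u, hu, rfl⟩
  · simp [hu, hv]; omega
  · simp [hu]; omega

end NonClosure
namespace NonClosure

/-! ### Class properties of the machine family -/

lemma ncard_le_one_of_subsingleton {α : Type*} {s : Set α} (h : s.Subsingleton) :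
    s.ncard ≤ 1 := by
  rcases s.eq_empty_or_nonempty with h0 | ⟨a, ha⟩
  · simp [h0]
  · rw [h.eq_singleton_of_mem ha]
    simp

lemma mach_sc (n : ℕ) : (Mach n).sc = (2*n+1) * (4*n+1) := by
  show Fintype.card (Qt n) = _
  simp [Qt, Dat]
  ring

lemma mach_polysize : PolySize1 Mach := by
  refine ⟨(2 * Polynomial.X + 1) * (4 * Polynomial.X + 1), fun n => ?_⟩
  rw [mach_sc]
  simp

lemma mach_solves : Solves1 Mach Fprob :=
  fun _ => ⟨fun _ hx => accepts_pos hx, fun _ hx => rejects_neg hx⟩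

lemma valid_le {n : ℕ} {x : List Bool} (hx : x ∈ Fprob.valid n) : x.length ≤ 2*n :=
  (valid_len hx).le

lemma mach_weak : WeaklyUnambiguous1 Mach Fprob := by
  intro n x hx q p1 h1 p2 h2
  exact path_unique (valid_le hx) h1.1.1 h2.1.1 (h1.2.trans h2.2.symm)

lemma mach_reachU : ReachUnambiguous1 Mach Fprob := by
  intro n x hx i hi q p1 h1 p2 h2
  refine path_unique ?_ h1.1 h2.1 (h1.2.trans h2.2.symm)
  rw [List.length_take]
  have := valid_len hx
  omega

lemma mach_reachFew : ReachFew1 Mach Fprob := by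
  refine ⟨1, fun n x hx i hi q => ?_⟩
  have h := ncard_le_one_of_subsingleton (mach_reachU n x hx i hi q)
  simpa using h

lemma mach_acceptFew : AcceptFew1 Mach Fprob := by
  refine ⟨(2 * MvPolynomial.X 0 + 1) * (4 * MvPolynomial.X 0 + 1), fun n x hx => ?_⟩
  have hb : {p | (Mach n).IsAccPath x p}.ncard ≤ (Set.univ : Set (Qt n)).ncard := by
    apply Set.ncard_le_ncard_of_injOn (fun p => p (Fin.last x.length))
    · intro a _; trivial
    · intro p1 h1 p2 h2 hlast
      exact path_unique (valid_le hx) h1.1 h2.1 hlast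
  refine le_trans hb ?_
  rw [Set.ncard_univ, Nat.card_eq_fintype_card]
  have : Fintype.card (Qt n) = (2*n+1) * (4*n+1) := mach_sc n
  rw [this]
  simp [MvPolynomial.eval_mul, MvPolynomial.eval_add]

lemma ffam_oneReachU : Ffam ∈ oneReachU :=
  ⟨Mach, mach_polysize, mach_acceptFew, mach_reachU, mach_solves⟩

lemma ffam_oneReachFewU : Ffam ∈ oneReachFewU :=
  ⟨Mach, mach_polysize, mach_acceptFew, mach_reachFew, mach_weak, mach_solves⟩

lemma ffam_oneFewU : Ffam ∈ oneFewU :=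
  ⟨Mach, mach_polysize, mach_acceptFew, mach_weak, mach_solves⟩

lemma ffam_oneFew : Ffam ∈ oneFew :=
  ⟨Mach, mach_polysize, mach_acceptFew, mach_solves⟩

end NonClosure
namespace NonClosure

/-! ### Polynomial vs exponential growth -/

lemma sq_lt_two_pow {t : ℕ} (ht : 5 ≤ t) : t^2 < 2^t := by
  induction t with
  | zero => omega
  | succ t ih =>
      rcases Nat.lt_or_ge t 5 with h | h
      · have h4 : t = 4 := by omega
        subst h4; norm_num
      · have h1 := ih (by omega)
        have h2 : (t+1)^2 ≤ 2 * t^2 := by nlinarith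
        calc (t+1)^2 ≤ 2 * t^2 := h2
          _ < 2 * 2^t := by omega
          _ = 2^(t+1) := by ring

lemma pow_lt_two_pow {k n : ℕ} (hn : 2^(2*k+5) ≤ n) : n^k < 2^n := by
  have hpos : (0:ℕ) < 2^(2*k+5) := by positivity
  have hn0 : n ≠ 0 := by omega
  set t := Nat.log 2 n with htdef
  have ht1 : 2*k+5 ≤ t := (Nat.le_log_iff_pow_le (by norm_num) hn0).mpr hn
  have ht2 : n < 2^(t+1) := Nat.lt_pow_succ_log_self (by norm_num) n
  have ht3 : 2^t ≤ n := Nat.pow_log_le_self 2 hn0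
  rcases Nat.eq_zero_or_pos k with hk | hk
  · subst hk
    rw [pow_zero]
    exact Nat.one_lt_two_pow_iff.mpr hn0
  · have hsq : t^2 < 2^t := sq_lt_two_pow (by omega)
    have hexp : (t+1)*k ≤ n := by
      have h1 : (t+1)*k*2 ≤ (t+1)*t := by
        have hkt : k*2 ≤ t := by omega
        calc (t+1)*k*2 = (t+1)*(k*2) := by ring
          _ ≤ (t+1)*t := Nat.mul_le_mul_left _ hkt
      have h2 : (t+1)*t ≤ t^2*2 := by nlinarith
      have h3 : (t+1)*k ≤ t^2 :=
        Nat.le_of_mul_le_mul_right (h1.trans h2) (by norm_num)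
      exact h3.trans (hsq.le.trans ht3)
    calc n^k < (2^(t+1))^k := Nat.pow_lt_pow_left ht2 (by omega)
      _ = 2^((t+1)*k) := by rw [← pow_mul]
      _ ≤ 2^n := Nat.pow_le_pow_right (by norm_num) hexp

lemma poly_lt_two_pow (p : Polynomial ℕ) : ∃ n, p.eval n < 2^n := by
  have d := p.natDegree
  refine ⟨2^(2*(p.natDegree+1)+5) + ∑ i ∈ Finset.range (p.natDegree+1), p.coeff i, ?_⟩
  set S := ∑ i ∈ Finset.range (p.natDegree+1), p.coeff i with hS
  set n := 2^(2*(p.natDegree+1)+5) + S with hn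
  have hSn : S ≤ n := Nat.le_add_left _ _
  have hn1 : 1 ≤ n := le_trans Nat.one_le_two_pow (Nat.le_add_right _ _)
  have h2 : p.eval n ≤ S * n^p.natDegree := by
    rw [Polynomial.eval_eq_sum_range, hS, Finset.sum_mul]
    apply Finset.sum_le_sum
    intro i hi
    exact Nat.mul_le_mul_left _ (Nat.pow_le_pow_right hn1 (by
      have := Finset.mem_range.mp hi; omega))
  have h3 : S * n^p.natDegree ≤ n^(p.natDegree+1) := by
    rw [pow_succ, mul_comm (n^p.natDegree) n]
    exact Nat.mul_le_mul_right _ hSn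
  have h4 : n^(p.natDegree+1) < 2^n := pow_lt_two_pow (Nat.le_add_right _ _)
  exact lt_of_le_of_lt (h2.trans h3) h4

end NonClosure
namespace NonClosure

/-! ### Lower bound: the complement needs exponentially many states -/

lemma card_lower {n : ℕ} {M : OneNFA Bool}
    (hacc : ∀ u : List Bool, u.length = n → M.Accepts (u ++ u))
    (hrej : ∀ u v : List Bool, u.length = n → v.length = n → u ≠ v → ¬ M.Accepts (u ++ v)) :
    2^n ≤ Fintype.card M.Q := by
  have hlen : ∀ f : Fin n → Bool, (List.ofFn f).length = n := fun f => List.length_ofFn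
  have hL : ∀ f f' : Fin n → Bool, (List.ofFn f ++ List.ofFn f').length = n + n := by
    intro f f'; simp
  have h : ∀ f : Fin n → Bool, ∃ p, M.IsAccPath (List.ofFn f ++ List.ofFn f) p :=
    fun f => hacc _ (hlen f)
  choose P hP using h
  set g : (Fin n → Bool) → M.Q := fun f => P f ⟨n, by have := hL f f; omega⟩ with hg
  have ginj : Function.Injective g := by
    intro f f' hgf
    by_contra hne
    have hn1 : 1 ≤ n := by
      rcases Nat.eq_zero_or_pos n with h0 | h0
      · exact absurd (funext fun x => absurd x.isLt (by omega)) hne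
      · exact h0
    have hnef : List.ofFn f ≠ List.ofFn f' := fun h => hne (List.ofFn_injective h)
    have e1 := hL f f'
    have e2 := hL f f
    have e3 := hL f' f'
    apply hrej _ _ (hlen f) (hlen f') hnef
    refine ⟨fun i => if i.val ≤ n then P f ⟨i.val, by have := i.isLt; omega⟩
      else P f' ⟨i.val, by have := i.isLt; omega⟩, ⟨?_, ?_⟩, ?_⟩
    · simp only [Fin.val_zero]
      simp only [Nat.zero_le, if_true]
      have h0 := (hP f).1.1
      rw [show (⟨0, by omega⟩ : Fin ((List.ofFn f ++ List.ofFn f).length + 1)) = 0 from by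
        ext; simp]
      exact h0
    · intro i
      have hi : i.val < n + n := by have := i.isLt; omega
      simp only [Fin.coe_castSucc, Fin.val_succ]
      rcases Nat.lt_trichotomy i.val n with hc | hc | hc
      · rw [if_pos (by omega : i.val ≤ n), if_pos (by omega : i.val + 1 ≤ n)]
        have hstep := (hP f).1.2 ⟨i.val, by omega⟩
        have hsym : (List.ofFn f ++ List.ofFn f').get i =
            (List.ofFn f ++ List.ofFn f).get ⟨i.val, by omega⟩ := by
          rw [List.get_eq_getElem, List.get_eq_getElem,
            List.getElem_append_left (by simp only [Fin.val_mk, List.length_ofFn]; omega),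
            List.getElem_append_left (by simp only [Fin.val_mk, List.length_ofFn]; omega)]
        rw [hsym]
        exact hstep
      · rw [if_pos (by omega : i.val ≤ n), if_neg (by omega : ¬ i.val + 1 ≤ n)]
        have hstep := (hP f').1.2 ⟨i.val, by omega⟩
        have hsym : (List.ofFn f ++ List.ofFn f').get i =
            (List.ofFn f' ++ List.ofFn f').get ⟨i.val, by omega⟩ := by
          rw [List.get_eq_getElem, List.get_eq_getElem,
            List.getElem_append_right (by simp only [Fin.val_mk, List.length_ofFn]; omega),
            List.getElem_append_right (by simp only [Fin.val_mk, List.length_ofFn]; omega)]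
          simp
        rw [hsym]
        have hmid : P f ⟨i.val, by omega⟩ = P f' ⟨i.val, by omega⟩ := by
          have d1 : (⟨i.val, by omega⟩ : Fin ((List.ofFn f ++ List.ofFn f).length + 1))
              = ⟨n, by omega⟩ := by ext; simp [hc]
          have d2 : (⟨i.val, by omega⟩ : Fin ((List.ofFn f' ++ List.ofFn f').length + 1))
              = ⟨n, by omega⟩ := by ext; simp [hc]
          rw [d1, d2]
          exact hgf
        rw [hmid]
        exact hstep
      · rw [if_neg (by omega : ¬ i.val ≤ n), if_neg (by omega : ¬ i.val + 1 ≤ n)]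
        have hstep := (hP f').1.2 ⟨i.val, by omega⟩
        have hsym : (List.ofFn f ++ List.ofFn f').get i =
            (List.ofFn f' ++ List.ofFn f').get ⟨i.val, by omega⟩ := by
          rw [List.get_eq_getElem, List.get_eq_getElem,
            List.getElem_append_right (by simp only [Fin.val_mk, List.length_ofFn]; omega),
            List.getElem_append_right (by simp only [Fin.val_mk, List.length_ofFn]; omega)]
          simp
        rw [hsym]
        exact hstep
    · simp only [Fin.val_last]
      rw [if_neg (by omega)]
      have hfin := (hP f').2
      rw [show (⟨(List.ofFn f ++ List.ofFn f').length, by omega⟩ :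
          Fin ((List.ofFn f' ++ List.ofFn f').length + 1))
          = Fin.last (List.ofFn f' ++ List.ofFn f').length from by ext; simp]
      exact hfin
  have := Fintype.card_le_of_injective g ginj
  simpa using this

lemma co_not_solvable : ¬ ∃ M : ℕ → OneNFA Bool, PolySize1 M ∧ Solves1 M Fprob.co := by
  rintro ⟨M, ⟨pb, hpb⟩, hsol⟩
  have hcard : ∀ n, 2^n ≤ (M n).sc := fun n =>
    card_lower
      (fun u hu => (hsol n).1 (u ++ u) ⟨u, hu, rfl⟩)
      (fun u v hu hv hne => (hsol n).2 (u ++ v) ⟨u, v, hu, hv, hne, rfl⟩)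
  obtain ⟨n, hn⟩ := poly_lt_two_pow pb
  have h1 := hpb n
  have h2 := hcard n
  omega

end NonClosure
/-- None of `1ReachU`, `1ReachFewU`, `1FewU`, `1Few` is closed under
complementation. -/
theorem non_closure_under_complementation :
    oneReachU ≠ coC oneReachU ∧ oneReachFewU ≠ coC oneReachFewU ∧
      oneFewU ≠ coC oneFewU ∧ oneFew ≠ coC oneFew := by
  open NonClosure in
  refine ⟨?_, ?_, ?_, ?_⟩ <;> intro heq
  · have h1 : Ffam ∈ coC oneReachU := heq ▸ ffam_oneReachU
    obtain ⟨M, hps, -, -, hsol⟩ := h1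
    exact co_not_solvable ⟨M, hps, hsol⟩
  · have h1 : Ffam ∈ coC oneReachFewU := heq ▸ ffam_oneReachFewU
    obtain ⟨M, hps, -, -, -, hsol⟩ := h1
    exact co_not_solvable ⟨M, hps, hsol⟩
  · have h1 : Ffam ∈ coC oneFewU := heq ▸ ffam_oneFewU
    obtain ⟨M, hps, -, -, hsol⟩ := h1
    exact co_not_solvable ⟨M, hps, hsol⟩
  · have h1 : Ffam ∈ coC oneFew := heq ▸ ffam_oneFew
    obtain ⟨M, hps, -, hsol⟩ := h1
    exact co_not_solvable ⟨M, hps, hsol⟩
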